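/- Let L be the first-order language with one binary function symbol ∧ and one ternary function symbol d, and let (A; ∧, d) be a regular SMB algebra over ~, regarded as an L-structure. Then for every L-term t in the variables x_1, …, x_n in which each of the variables x_1, …, x_n actually occurs, and for all a_1, …, a_n ∈ A, the value t(a_1, …, a_n) satisfies t(a_1, …, a_n) ~ (…((a_1∧a_2)∧a_3)…)∧a_n; that is, [t(a_1,…,a_n)]_~ equals the semilattice meet [a_1]_~ ∧ … ∧ [a_n]_~ in A/~. -/

import Mathlib

/-- An equivalence relation on `A` compatible with the binary operation `m`
and the ternary operation `d`, i.e. a congruence of the algebra `(A; m, d)`. -/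
structure IsCongruence {A : Type*} (m : A → A → A) (d : A → A → A → A)
    (θ : A → A → Prop) : Prop where
  equiv : Equivalence θ
  compat_m : ∀ {a a' b b'}, θ a a' → θ b b' → θ (m a b) (m a' b')
  compat_d : ∀ {a a' b b' c c'}, θ a a' → θ b b' → θ c c' → θ (d a b c) (d a' b' c')

/-- `(A; m, d)` is an SMB algebra over the congruence `r`. -/
structure IsSMB {A : Type*} (m : A → A → A) (d : A → A → A → A)
    (r : A → A → Prop) : Prop where
  cong : IsCongruence m d r
  idem_m : ∀ x, m x x = x
  idem_d : ∀ x, d x x x = x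
  comm : ∀ x y, r (m x y) (m y x)
  assoc : ∀ x y z, r (m (m x y) z) (m x (m y z))
  proj : ∀ a b, r a b → m a b = b
  mal_left : ∀ a b, r a b → d a b b = a
  mal_right : ∀ a b, r a b → d b b a = a

/-- `(A; m, d)` is a regular SMB algebra over the congruence `r`. -/
structure IsRegularSMB {A : Type*} (m : A → A → A) (d : A → A → A → A)
    (r : A → A → Prop) : Prop where
  smb : IsSMB m d r
  reg1 : ∀ a b c, r (d a b c) (m (m a b) c)
  reg2 : ∀ a b, r (m a b) b → m a b = b
  reg3 : ∀ x y z, d x y z = d (m (m y z) x) (m (m x z) y) (m (m x y) z)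
  reg4 : ∀ x y, m (m x y) y = m x y

/-- The principal congruence generated by the pair `(a, b)`: the smallest
congruence of `(A; m, d)` containing `(a, b)`. -/
def Cg {A : Type*} (m : A → A → A) (d : A → A → A → A) (a b : A) : A → A → Prop :=
  fun x y => ∀ θ : A → A → Prop, IsCongruence m d θ → θ a b → θ x y

/-- The join of two congruences: the smallest congruence of `(A; m, d)`
containing both `ρ` and `σ`. -/
def congJoin {A : Type*} (m : A → A → A) (d : A → A → A → A)
    (ρ σ : A → A → Prop) : A → A → Prop :=
  fun x y => ∀ θ : A → A → Prop, IsCongruence m d θ →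
    (∀ u v, ρ u v → θ u v) → (∀ u v, σ u v → θ u v) → θ x y

/-- Terms of the first-order language with one binary function symbol `∧` and
one ternary function symbol `d`, in variables indexed by `Fin k`. -/
inductive SMBTerm (k : ℕ) : Type
  | var : Fin k → SMBTerm k
  | meet : SMBTerm k → SMBTerm k → SMBTerm k
  | mal : SMBTerm k → SMBTerm k → SMBTerm k → SMBTerm k

/-- Evaluation of a term in the algebra `(A; m, d)` under the assignment `v`. -/
def SMBTerm.eval {A : Type*} (m : A → A → A) (d : A → A → A → A) {k : ℕ}
    (v : Fin k → A) : SMBTerm k → A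
  | .var i => v i
  | .meet s t => m (s.eval m d v) (t.eval m d v)
  | .mal s t u => d (s.eval m d v) (t.eval m d v) (u.eval m d v)

/-- The variable `i` occurs in the term `t`. -/
def SMBTerm.occurs {k : ℕ} (i : Fin k) : SMBTerm k → Prop
  | .var j => i = j
  | .meet s t => s.occurs i ∨ t.occurs i
  | .mal s t u => s.occurs i ∨ t.occurs i ∨ u.occurs i


section Aux

variable {Q : Type*} [SemilatticeInf Q]

/-- Evaluation of a term in a semilattice, interpreting `d` as `(x ⊓ y) ⊓ z`. -/
def evq {k : ℕ} (v : Fin k → Q) : SMBTerm k → Q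
  | .var i => v i
  | .meet s t => evq v s ⊓ evq v t
  | .mal s t u => evq v s ⊓ evq v t ⊓ evq v u

lemma evq_le {k : ℕ} (v : Fin k → Q) (t : SMBTerm k) (i : Fin k)
    (h : t.occurs i) : evq v t ≤ v i := by
  induction t with
  | var j => cases h; exact le_rfl
  | meet s t ihs iht =>
    rcases h with h | h
    · exact inf_le_left.trans (ihs h)
    · exact inf_le_right.trans (iht h)
  | mal s t u ihs iht ihu =>
    rcases h with h | h | h
    · exact (inf_le_left.trans inf_le_left).trans (ihs h)
    · exact (inf_le_left.trans inf_le_right).trans (iht h)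
    · exact inf_le_right.trans (ihu h)

lemma le_evq {k : ℕ} (v : Fin k → Q) (t : SMBTerm k) (x : Q)
    (h : ∀ i, x ≤ v i) : x ≤ evq v t := by
  induction t with
  | var j => exact h j
  | meet s t ihs iht => exact le_inf ihs iht
  | mal s t u ihs iht ihu => exact le_inf (le_inf ihs iht) ihu

lemma foldl_inf_le_init (l : List Q) (x : Q) : l.foldl (· ⊓ ·) x ≤ x := by
  induction l generalizing x with
  | nil => exact le_rfl
  | cons y l ih => exact (ih (x ⊓ y)).trans inf_le_left

lemma foldl_inf_le_mem (l : List Q) : ∀ x y, y ∈ l → l.foldl (· ⊓ ·) x ≤ y := by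
  induction l with
  | nil => intro x y hy; cases hy
  | cons z l ih =>
    intro x y hy
    rcases List.mem_cons.mp hy with rfl | hy
    · exact (foldl_inf_le_init l (x ⊓ y)).trans inf_le_right
    · exact ih (x ⊓ z) y hy

lemma le_foldl_inf (l : List Q) :
    ∀ x b, x ≤ b → (∀ y ∈ l, x ≤ y) → x ≤ l.foldl (· ⊓ ·) b := by
  induction l with
  | nil => intro x b hb _; exact hb
  | cons z l ih =>
    intro x b hb hl
    exact ih x (b ⊓ z) (le_inf hb (hl z List.mem_cons_self))
      (fun y hy => hl y (List.mem_cons_of_mem z hy))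

end Aux

/-- In a regular SMB algebra over `~`, the value of any term
`t(a₁, …, a_{n+1})` in which every variable occurs lies in the `~`-class
`[a₁]_~ ∧ … ∧ [a_{n+1}]_~`, i.e.
`t(a₁,…,a_{n+1}) ~ (…((a₁∧a₂)∧a₃)…)∧a_{n+1}`. -/
theorem regular_smb_term_class {A : Type*} (m : A → A → A) (d : A → A → A → A)
    (r : A → A → Prop) (h : IsRegularSMB m d r) (n : ℕ)
    (t : SMBTerm (n + 1)) (ht : ∀ i : Fin (n + 1), t.occurs i)
    (a : Fin (n + 1) → A) :
    r (t.eval m d a) ((List.ofFn a).tail.foldl m (a 0)) := by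
  letI st : Setoid A := ⟨r, h.smb.cong.equiv⟩
  letI : Min (Quotient st) :=
    ⟨Quotient.map₂ m (fun _ _ h1 _ _ h2 => h.smb.cong.compat_m h1 h2)⟩
  letI : SemilatticeInf (Quotient st) := SemilatticeInf.mk'
    (fun x y => Quotient.inductionOn₂ x y fun p q => Quotient.sound (h.smb.comm p q))
    (fun x y z => Quotient.inductionOn₃ x y z fun p q w =>
      Quotient.sound (h.smb.assoc p q w))
    (fun x => Quotient.inductionOn x fun p =>
      congrArg _ (h.smb.idem_m p))
  have hmk : ∀ x y : A, (⟦x⟧ : Quotient st) ⊓ ⟦y⟧ = ⟦m x y⟧ := fun _ _ => rfl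
  set v : Fin (n + 1) → Quotient st := fun i => ⟦a i⟧ with hv
  have heval : ∀ t : SMBTerm (n + 1), (⟦t.eval m d a⟧ : Quotient st) = evq v t := by
    intro t
    induction t with
    | var i => rfl
    | meet s t ihs iht => rw [SMBTerm.eval, ← hmk, ihs, iht]; rfl
    | mal s t u ihs iht ihu =>
      rw [SMBTerm.eval,
        Quotient.sound (s := st) (h.reg1 (s.eval m d a) (t.eval m d a) (u.eval m d a)),
        ← hmk, ← hmk, ihs, iht, ihu]
      rfl
  have hfold : ∀ (l : List A) (x : A),
      (⟦l.foldl m x⟧ : Quotient st) = (l.map (⟦·⟧)).foldl (· ⊓ ·) ⟦x⟧ := by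
    intro l
    induction l with
    | nil => intro x; rfl
    | cons y l ih => intro x; simpa [hmk] using ih (m x y)
  rw [show r (t.eval m d a) ((List.ofFn a).tail.foldl m (a 0)) ↔
      (⟦t.eval m d a⟧ : Quotient st) = ⟦(List.ofFn a).tail.foldl m (a 0)⟧ from
      (Quotient.eq (r := st)).symm]
  rw [heval t, hfold]
  set L : List (Quotient st) := (List.ofFn a).tail.map (⟦·⟧) with hL
  have hmemL : ∀ y ∈ L, ∃ i, y = v i := by
    intro y hy
    rcases List.mem_map.mp hy with ⟨z, hz, rfl⟩
    rcases List.mem_ofFn.mp (List.mem_of_mem_tail hz) with ⟨i, rfl⟩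
    exact ⟨i, rfl⟩
  have hallL : ∀ i : Fin (n + 1), v i = ⟦a 0⟧ ∨ v i ∈ L := by
    intro i
    refine Fin.cases (Or.inl rfl) (fun j => Or.inr ?_) i
    apply List.mem_map_of_mem
    rw [List.ofFn_succ]
    exact List.mem_ofFn.mpr ⟨j, rfl⟩
  apply le_antisymm
  · apply le_foldl_inf
    · exact evq_le v t 0 (ht 0)
    · intro y hy
      rcases hmemL y hy with ⟨i, rfl⟩
      exact evq_le v t i (ht i)
  · apply le_evq
    intro i
    rcases hallL i with hi | hi
    · exact foldl_inf_le_init L ⟦a 0⟧ |>.trans (le_of_eq hi.symm)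
    · exact foldl_inf_le_mem L ⟦a 0⟧ (v i) hi
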